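/- arXiv:2509.05664 — 3 statements merged into one kernel-verified Lean document; each statement's English description precedes it below -/
import Mathlib

section
/- Let α > 0, ω > 0, ν ∈ (0, π/2), τ ∈ (0, π) with τ > ν. Then the contour of integration can be shifted upward by iν without crossing any pole: ∫_{−∞}^{∞} e^{−α ω cosh(t − iν)} sinh(t) / (cosh t − cos τ) dt = ∫_{−∞}^{∞} e^{−α ω cosh s} sinh(s + iν) / (cosh(s + iν) − cos τ) ds. -/
open Complex MeasureTheory Filter Set Topology

noncomputable section ContourShiftAux

private lemma coshReZ (z : ℂ) : (Complex.cosh z).re = Real.cosh z.re * Real.cos z.im := by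
  conv_lhs => rw [← Complex.re_add_im z]
  rw [Complex.cosh_add, Complex.cosh_mul_I, Complex.sinh_mul_I]
  simp [← Complex.ofReal_cosh, ← Complex.ofReal_sinh, ← Complex.ofReal_cos, ← Complex.ofReal_sin]

private lemma absSinh (z : ℂ) : ‖Complex.sinh z‖ ≤ Real.cosh z.re := by
  have hs : Complex.sinh z = (Complex.exp z - Complex.exp (-z)) / 2 := by
    linear_combination (Complex.two_sinh z) / 2
  rw [hs, Real.cosh_eq]
  calc ‖(Complex.exp z - Complex.exp (-z)) / 2‖
      ≤ (‖Complex.exp z‖ + ‖Complex.exp (-z)‖) / 2 := by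
        rw [norm_div]
        simp only [Complex.norm_two]
        gcongr
        exact norm_sub_le _ _
    _ = (Real.exp z.re + Real.exp (-z.re)) / 2 := by
        rw [Complex.norm_exp, Complex.norm_exp, Complex.neg_re]

private lemma sq_half_le_cosh (x : ℝ) : x ^ 2 / 2 ≤ Real.cosh x := by
  have h1 : Real.cosh x = Real.cosh (x / 2) ^ 2 + Real.sinh (x / 2) ^ 2 := by
    rw [← Real.cosh_two_mul]; ring_nf
  have h2 : (x / 2) ^ 2 ≤ Real.sinh (x / 2) ^ 2 := by
    rcases le_or_gt 0 (x / 2) with h | h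
    · rcases eq_or_lt_of_le h with h' | h'
      · simp [← h']
      · nlinarith [Real.self_lt_sinh_iff.2 h']
    · have h' : 0 < -(x / 2) := by linarith
      have := Real.self_lt_sinh_iff.2 h'
      rw [Real.sinh_neg] at this
      nlinarith
  nlinarith [Real.cosh_sq (x / 2), Real.sinh_sq (x / 2), Real.one_le_cosh (x / 2)]

/-- the integrand, as a function of a complex variable -/
private def fct (c ν τ : ℝ) (z : ℂ) : ℂ :=
  Complex.exp (-(c : ℂ) * Complex.cosh (z - Complex.I * ν)) * Complex.sinh z /
    (Complex.cosh z - (Real.cos τ : ℂ))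

end ContourShiftAux

set_option maxHeartbeats 1600000 in
/-- when `τ > ν`, shifting the contour upward by `iν` crosses no pole, so the
two integrals agree. -/
theorem stmt2 (α ω ν τ : ℝ) (hα : 0 < α) (hω : 0 < ω)
    (hν : ν ∈ Set.Ioo 0 (Real.pi / 2)) (hτ : τ ∈ Set.Ioo 0 Real.pi) (hντ : ν < τ) :
    ∫ t : ℝ, Complex.exp (-(α * ω : ℝ) * Complex.cosh ((t : ℂ) - Complex.I * ν)) *
        Complex.sinh (t : ℂ) / (Complex.cosh (t : ℂ) - (Real.cos τ : ℂ)) =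
      ∫ s : ℝ, Complex.exp (-(α * ω : ℝ) * Complex.cosh (s : ℂ)) *
        Complex.sinh ((s : ℂ) + Complex.I * ν) /
          (Complex.cosh ((s : ℂ) + Complex.I * ν) - (Real.cos τ : ℂ)) := by
  obtain ⟨f, hfdef⟩ : ∃ f : ℂ → ℂ, f = fct (α * ω) ν τ := ⟨_, rfl⟩
  obtain ⟨c₀, hc₀def⟩ : ∃ c₀ : ℝ, c₀ = α * ω * Real.cos ν := ⟨_, rfl⟩
  obtain ⟨δ, hδdef⟩ : ∃ δ : ℝ, δ = Real.cos ν - Real.cos τ := ⟨_, rfl⟩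
  have hcosν : 0 < Real.cos ν := Real.cos_pos_of_mem_Ioo ⟨by linarith [hν.1, Real.pi_pos], hν.2⟩
  have hc₀ : 0 < c₀ := by rw [hc₀def]; positivity
  have hδ : 0 < δ := by
    have := Real.cos_lt_cos_of_nonneg_of_le_pi hν.1.le hτ.2.le hντ
    rw [hδdef]; linarith
  have hνπ : ν ≤ Real.pi := by linarith [Real.pi_pos, hν.2, Real.pi_gt_three]
  -- real part of denominator is bounded below on the strip
  have hre : ∀ z : ℂ, z.im ∈ Set.Icc 0 ν → δ ≤ (Complex.cosh z - (Real.cos τ : ℂ)).re := by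
    intro z hz
    rw [hδdef, Complex.sub_re, Complex.ofReal_re, coshReZ]
    have h1 : Real.cos ν ≤ Real.cos z.im :=
      Real.cos_le_cos_of_nonneg_of_le_pi hz.1 hνπ hz.2
    have h2 : 1 ≤ Real.cosh z.re := Real.one_le_cosh z.re
    nlinarith
  have hne : ∀ z : ℂ, z.im ∈ Set.Icc 0 ν → Complex.cosh z - (Real.cos τ : ℂ) ≠ 0 := by
    intro z hz h
    have := hre z hz
    rw [h] at this
    simp at this
    linarith
  -- differentiability on the strip
  have hdiff : ∀ z : ℂ, z.im ∈ Set.Icc 0 ν → DifferentiableAt ℂ f z := by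
    intro z hz
    rw [hfdef]
    unfold fct
    apply DifferentiableAt.div
    · exact ((Complex.differentiable_exp.comp ((differentiable_const _).mul
        (Complex.differentiable_cosh.comp (differentiable_id.sub (differentiable_const _))))).mul
        Complex.differentiable_sinh).differentiableAt
    · exact (Complex.differentiable_cosh.sub (differentiable_const _)).differentiableAt
    · exact hne z hz
  -- the key norm bound on the strip
  have hbound : ∀ z : ℂ, z.im ∈ Set.Icc 0 ν →
      ‖f z‖ ≤ Real.exp (-(c₀ * Real.cosh z.re)) * Real.cosh z.re / δ := by
    intro z hz
    rw [hfdef, fct, norm_div, norm_mul]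
    have h1 : ‖Complex.exp (-(↑(α * ω) : ℂ) * Complex.cosh (z - Complex.I * ν))‖ ≤
        Real.exp (-(c₀ * Real.cosh z.re)) := by
      rw [Complex.norm_exp, Real.exp_le_exp]
      have hre' : (-(↑(α * ω) : ℂ) * Complex.cosh (z - Complex.I * ν)).re
          = -(α * ω) * ((Complex.cosh (z - Complex.I * ν)).re) := by
        simp [Complex.mul_re]
      rw [hre', coshReZ]
      have him : (z - Complex.I * ν).im = z.im - ν := by simp
      have hrez : (z - Complex.I * ν).re = z.re := by simp
      rw [him, hrez]
      have hcos : Real.cos ν ≤ Real.cos (z.im - ν) := by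
        rw [show z.im - ν = -(ν - z.im) by ring, Real.cos_neg]
        exact Real.cos_le_cos_of_nonneg_of_le_pi (by linarith [hz.2]) hνπ (by linarith [hz.1])
      have hch : 1 ≤ Real.cosh z.re := Real.one_le_cosh z.re
      have : 0 < α * ω := by positivity
      rw [hc₀def]
      nlinarith [mul_le_mul_of_nonneg_right (mul_le_mul_of_nonneg_left hcos this.le)
        (Real.cosh_pos z.re).le]
    have h2 : ‖Complex.sinh z‖ ≤ Real.cosh z.re := absSinh z
    have h3 : δ ≤ ‖Complex.cosh z - (Real.cos τ : ℂ)‖ :=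
      le_trans (hre z hz) (Complex.re_le_norm _)
    exact div_le_div₀ (by positivity)
      (mul_le_mul h1 h2 (norm_nonneg _) (Real.exp_nonneg _)) hδ h3
  -- dominating function
  have hgb : ∀ x : ℝ, Real.exp (-(c₀ * Real.cosh x)) * Real.cosh x / δ ≤
      (2 / c₀) * Real.exp (-(c₀ / 4) * x ^ 2) / δ := by
    intro x
    have hsplit : Real.exp (-(c₀ * Real.cosh x)) * Real.cosh x
        = (Real.cosh x * Real.exp (-(c₀ / 2 * Real.cosh x))) *
          Real.exp (-(c₀ / 2 * Real.cosh x)) := by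
      rw [show -(c₀ * Real.cosh x) = -(c₀ / 2 * Real.cosh x) + -(c₀ / 2 * Real.cosh x) by ring,
        Real.exp_add]
      ring
    have h1 : Real.cosh x * Real.exp (-(c₀ / 2 * Real.cosh x)) ≤ 2 / c₀ := by
      rw [Real.exp_neg, mul_inv_le_iff₀ (Real.exp_pos _), div_mul_eq_mul_div, le_div_iff₀ hc₀]
      have := Real.add_one_le_exp (c₀ / 2 * Real.cosh x)
      linarith
    have h2 : Real.exp (-(c₀ / 2 * Real.cosh x)) ≤ Real.exp (-(c₀ / 4) * x ^ 2) := by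
      apply Real.exp_le_exp.2
      nlinarith [mul_le_mul_of_nonneg_left (sq_half_le_cosh x) hc₀.le]
    refine div_le_div₀ (by positivity) ?_ hδ le_rfl
    calc Real.exp (-(c₀ * Real.cosh x)) * Real.cosh x
        = (Real.cosh x * Real.exp (-(c₀ / 2 * Real.cosh x))) *
          Real.exp (-(c₀ / 2 * Real.cosh x)) := hsplit
      _ ≤ (2 / c₀) * Real.exp (-(c₀ / 4) * x ^ 2) :=
          mul_le_mul h1 h2 (Real.exp_nonneg _) (by positivity)
  -- the dominating function is integrable
  have hGint : Integrable (fun x : ℝ => (2 / c₀) * Real.exp (-(c₀ / 4) * x ^ 2) / δ) := by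
    have := integrable_exp_neg_mul_sq (show (0:ℝ) < c₀ / 4 by positivity)
    exact (this.const_mul _).div_const _
  -- continuity along horizontal lines in the strip
  have hcf : ∀ φ : ℝ → ℂ, Continuous φ → (∀ t, (φ t).im ∈ Set.Icc 0 ν) →
      Continuous fun t => f (φ t) := by
    intro φ hφ him
    rw [continuous_iff_continuousAt]
    intro t
    exact (hdiff (φ t) (him t)).continuousAt.comp hφ.continuousAt
  -- integrability of the two horizontal integrands
  have him0 : ∀ t : ℝ, ((t : ℂ)).im ∈ Set.Icc 0 ν := fun t => by
    simp [Set.mem_Icc, hν.1.le]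
  have himν : ∀ t : ℝ, ((t : ℂ) + (ν : ℂ) * Complex.I).im ∈ Set.Icc 0 ν := fun t => by
    simp [Set.mem_Icc, hν.1.le]
  have hint0 : Integrable fun t : ℝ => f (t : ℂ) := by
    apply Integrable.mono' hGint
      ((hcf _ Complex.continuous_ofReal him0).aestronglyMeasurable)
    filter_upwards with t
    refine (hbound _ (him0 t)).trans ?_
    simpa using hgb t
  have hintν : Integrable fun t : ℝ => f ((t : ℂ) + (ν : ℂ) * Complex.I) := by
    apply Integrable.mono' hGint
      ((hcf _ (by continuity) himν).aestronglyMeasurable)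
    filter_upwards with t
    refine (hbound _ (himν t)).trans ?_
    have : ((t : ℂ) + (ν : ℂ) * Complex.I).re = t := by simp
    rw [this]
    exact hgb t
  -- rectangle contour identity
  have hrect : ∀ R : ℝ,
      ((∫ x in (-R : ℝ)..R, f (x : ℂ)) - ∫ x in (-R : ℝ)..R, f ((x : ℂ) + (ν : ℂ) * Complex.I))
        = Complex.I • (∫ y in (0:ℝ)..ν, f (-(R : ℂ) + (y : ℂ) * Complex.I)) -
          Complex.I • ∫ y in (0:ℝ)..ν, f ((R : ℂ) + (y : ℂ) * Complex.I) := by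
    intro R
    have H := Complex.integral_boundary_rect_eq_zero_of_differentiableOn f
      ((-R : ℝ) : ℂ) (((R : ℝ) : ℂ) + (ν : ℂ) * Complex.I) ?_
    · simp only [Complex.ofReal_re, Complex.ofReal_im, Complex.add_re, Complex.add_im,
        Complex.mul_re, Complex.mul_im, Complex.I_re, Complex.I_im, mul_zero, mul_one,
        zero_mul, sub_zero, zero_add, add_zero, Complex.ofReal_zero, Complex.ofReal_neg,
        Complex.neg_re, Complex.neg_im, neg_zero, zero_sub, neg_neg] at H
      linear_combination H
    · intro z hz
      rw [Complex.mem_reProdIm] at hz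
      refine (hdiff z ?_).differentiableWithinAt
      have h2 := hz.2
      have e1 : ((-R : ℝ) : ℂ).im = 0 := by simp
      have e2 : (((R : ℝ) : ℂ) + (ν : ℂ) * Complex.I).im = ν := by simp
      rw [e1, e2, Set.uIcc_of_le hν.1.le] at h2
      exact h2
  -- uniform bound on the vertical segments
  have hnorm_vert : ∀ x : ℝ, ‖Complex.I • ∫ y in (0:ℝ)..ν, f ((x : ℂ) + (y : ℂ) * Complex.I)‖
      ≤ Real.exp (-(c₀ * Real.cosh x)) * Real.cosh x / δ * ν := by
    intro x
    rw [norm_smul, Complex.norm_I, one_mul]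
    have hb := intervalIntegral.norm_integral_le_of_norm_le_const
      (C := Real.exp (-(c₀ * Real.cosh x)) * Real.cosh x / δ)
      (f := fun y : ℝ => f ((x : ℂ) + (y : ℂ) * Complex.I)) (a := 0) (b := ν) ?_
    · calc ‖∫ y in (0:ℝ)..ν, f ((x : ℂ) + (y : ℂ) * Complex.I)‖
          ≤ Real.exp (-(c₀ * Real.cosh x)) * Real.cosh x / δ * |ν - 0| := hb
        _ = Real.exp (-(c₀ * Real.cosh x)) * Real.cosh x / δ * ν := by
            rw [sub_zero, _root_.abs_of_nonneg hν.1.le]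
    · intro y hy
      rw [Set.uIoc_of_le hν.1.le] at hy
      have him : ((x : ℂ) + (y : ℂ) * Complex.I).im = y := by simp
      have hrx : ((x : ℂ) + (y : ℂ) * Complex.I).re = x := by simp
      have := hbound _ (by rw [him]; exact ⟨hy.1.le, hy.2⟩)
      rwa [hrx] at this
  -- the vertical bound tends to zero
  have hcosh_top : Tendsto Real.cosh atTop atTop := by
    have hle : ∀ x : ℝ, Real.exp x / 2 ≤ Real.cosh x := fun x => by
      rw [Real.cosh_eq]
      have := Real.exp_pos (-x)
      linarith
    have h2 : Tendsto (fun x : ℝ => Real.exp x / 2) atTop atTop :=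
      Real.tendsto_exp_atTop.atTop_div_const (by norm_num)
    exact tendsto_atTop_mono hle h2
  have hb0 : Tendsto (fun R : ℝ => Real.exp (-(c₀ * Real.cosh R)) * Real.cosh R / δ * ν)
      atTop (𝓝 0) := by
    have h1 : Tendsto (fun u : ℝ => u * Real.exp (-u)) atTop (𝓝 0) := by
      simpa using Real.tendsto_pow_mul_exp_neg_atTop_nhds_zero 1
    have h2 : Tendsto (fun R : ℝ => c₀ * Real.cosh R) atTop atTop :=
      hcosh_top.const_mul_atTop hc₀
    have h3 := (h1.comp h2).mul_const (ν / (c₀ * δ))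
    rw [zero_mul] at h3
    refine h3.congr fun R => ?_
    simp only [Function.comp_apply]
    field_simp
  have hv1 : Tendsto (fun R : ℝ =>
      Complex.I • ∫ y in (0:ℝ)..ν, f (-(R : ℂ) + (y : ℂ) * Complex.I)) atTop (𝓝 0) := by
    apply squeeze_zero_norm (fun R => ?_) hb0
    have := hnorm_vert (-R)
    simpa [Real.cosh_neg, Complex.ofReal_neg] using this
  have hv2 : Tendsto (fun R : ℝ =>
      Complex.I • ∫ y in (0:ℝ)..ν, f ((R : ℂ) + (y : ℂ) * Complex.I)) atTop (𝓝 0) :=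
    squeeze_zero_norm (fun R => hnorm_vert R) hb0
  -- limits of the horizontal integrals
  have hFt : Tendsto (fun R : ℝ => ∫ x in (-R : ℝ)..R, f (x : ℂ)) atTop
      (𝓝 (∫ t : ℝ, f (t : ℂ))) :=
    intervalIntegral_tendsto_integral hint0 tendsto_neg_atTop_atBot tendsto_id
  have hGt : Tendsto (fun R : ℝ => ∫ x in (-R : ℝ)..R, f ((x : ℂ) + (ν : ℂ) * Complex.I)) atTop
      (𝓝 (∫ t : ℝ, f ((t : ℂ) + (ν : ℂ) * Complex.I))) :=
    intervalIntegral_tendsto_integral hintν tendsto_neg_atTop_atBot tendsto_id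
  have hsub := hFt.sub hGt
  have hzero : Tendsto (fun R : ℝ =>
      ((∫ x in (-R : ℝ)..R, f (x : ℂ)) - ∫ x in (-R : ℝ)..R, f ((x : ℂ) + (ν : ℂ) * Complex.I)))
      atTop (𝓝 0) := by
    have := hv1.sub hv2
    rw [sub_zero] at this
    exact this.congr fun R => (hrect R).symm
  have hkey : (∫ t : ℝ, f (t : ℂ)) = ∫ t : ℝ, f ((t : ℂ) + (ν : ℂ) * Complex.I) :=
    sub_eq_zero.mp (tendsto_nhds_unique hsub hzero)
  -- convert the statement to `f`
  calc ∫ t : ℝ, Complex.exp (-(α * ω : ℝ) * Complex.cosh ((t : ℂ) - Complex.I * ν)) *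
        Complex.sinh (t : ℂ) / (Complex.cosh (t : ℂ) - (Real.cos τ : ℂ))
      = ∫ t : ℝ, f (t : ℂ) := by
        refine congrArg _ (funext fun t => ?_)
        rw [hfdef]
        rfl
    _ = ∫ t : ℝ, f ((t : ℂ) + (ν : ℂ) * Complex.I) := hkey
    _ = ∫ s : ℝ, Complex.exp (-(α * ω : ℝ) * Complex.cosh (s : ℂ)) *
        Complex.sinh ((s : ℂ) + Complex.I * ν) /
          (Complex.cosh ((s : ℂ) + Complex.I * ν) - (Real.cos τ : ℂ)) := by
      refine congrArg _ (funext fun s => ?_)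
      rw [hfdef]
      show fct (α * ω) ν τ ((s : ℂ) + (ν : ℂ) * Complex.I) = _
      unfold fct
      rw [show ((s : ℂ) + (ν : ℂ) * Complex.I) = (s : ℂ) + Complex.I * (ν : ℂ) from by ring,
        add_sub_cancel_right]
end

section
/- Let a ∈ (0, 1) be fixed, and let (u_k)_{k≥0} be the Maclaurin coefficients in powers of σ² of the real-analytic function σ ↦ 1/[(σ² + a²)√(1+σ²)] near σ = 0. Then for every n ∈ ℕ, as z → ∞ along the positive reals, ∫_{−∞}^{∞} e^{−z σ²} / [(σ² + a²)√(1+σ²)] dσ − √(π/z) Σ_{k=0}^{n} u_k (1/2)_k z^{−k} = O(z^{−n − 3/2}), where (1/2)_k = Γ(1/2 + k)/Γ(1/2) is the Pochhammer symbol. -/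
open Filter Asymptotics

section aux

open MeasureTheory Real Set

private lemma moment_int {b : ℝ} (hb : 0 < b) (m : ℕ) :
    ∫ x : ℝ, x ^ (2 * m) * Real.exp (-b * x ^ 2)
      = Real.Gamma (m + 1/2) * b ^ (-(m : ℝ) - 1/2) := by
  have h1 : ∫ x : ℝ, x ^ (2 * m) * Real.exp (-b * x ^ 2)
      = 2 * ∫ x in Ioi (0:ℝ), x ^ (2 * m) * Real.exp (-b * x ^ 2) := by
    rw [← integral_comp_abs (f := fun x => x ^ (2 * m) * Real.exp (-b * x ^ 2))]
    congr 1
    ext x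
    rw [pow_mul, pow_mul, sq_abs]
  have h2 : ∫ x in Ioi (0:ℝ), x ^ (2 * m) * Real.exp (-b * x ^ 2)
      = ∫ x in Ioi (0:ℝ), x ^ ((2 * m : ℕ) : ℝ) * Real.exp (-b * x ^ (2:ℝ)) := by
    refine setIntegral_congr_fun measurableSet_Ioi (fun x hx => ?_)
    rw [Real.rpow_natCast, Real.rpow_two]
  rw [h1, h2, integral_rpow_mul_exp_neg_mul_rpow (by norm_num) (lt_of_lt_of_le neg_one_lt_zero (Nat.cast_nonneg _)) hb]
  have : (((2 * m : ℕ) : ℝ) + 1) / 2 = (m : ℝ) + 1/2 := by push_cast; ring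
  have h3 : -(((2 * m : ℕ) : ℝ) + 1) / 2 = -(m : ℝ) - 1/2 := by push_cast; ring
  rw [this, h3]
  ring

private lemma remainder_bound (a : ℝ) (ha : 0 < a) (u : ℕ → ℝ) (r : ℝ) (hr : 0 < r)
    (hu : ∀ σ : ℝ, |σ| < r →
      HasSum (fun k : ℕ => u k * σ ^ (2 * k))
        (1 / ((σ ^ 2 + a ^ 2) * Real.sqrt (1 + σ ^ 2)))) (n : ℕ) :
    ∃ C : ℝ, ∀ σ : ℝ,
      |1 / ((σ ^ 2 + a ^ 2) * Real.sqrt (1 + σ ^ 2))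
        - ∑ k ∈ Finset.range (n + 1), u k * σ ^ (2 * k)| ≤ C * σ ^ (2 * (n + 1)) := by
  set ρ : ℝ := r / 2 with hρdef
  set δ : ℝ := r / 4 with hδdef
  have hρ : 0 < ρ := by positivity
  have hδ : 0 < δ := by positivity
  -- bound on coefficients
  have hsum := (hu ρ (by rw [abs_of_pos hρ]; simp [hρdef]; linarith)).summable
  have htend : Tendsto (fun k => |u k * ρ ^ (2 * k)|) atTop (nhds 0) := by
    simpa using hsum.tendsto_atTop_zero.abs
  obtain ⟨M, hM⟩ := htend.bddAbove_range
  have hM' : ∀ k, |u k| * (ρ ^ 2) ^ k ≤ M := by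
    intro k
    have := hM (Set.mem_range_self k)
    rwa [abs_mul, abs_pow, abs_of_pos hρ, pow_mul] at this
  have hM0 : 0 ≤ M := le_trans (by positivity) (hM' 0)
  set C₁ : ℝ := M / (ρ ^ 2) ^ (n + 1) * 2 with hC₁
  set C₂ : ℝ := (1 / a ^ 2 + ∑ k ∈ Finset.range (n + 1), |u k| * (δ ^ 2) ^ k) / (δ ^ 2) ^ (n + 1)
    with hC₂
  refine ⟨max C₁ C₂, fun σ => ?_⟩
  have hσsq : (0:ℝ) ≤ σ ^ 2 := sq_nonneg σ
  rcases le_or_gt (|σ|) δ with hcase | hcase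
  · -- small σ
    have hσr : |σ| < r := lt_of_le_of_lt hcase (by rw [hδdef]; linarith)
    have hs := hu σ hσr
    have hA : σ ^ 2 ≤ ρ ^ 2 / 2 := by
      have h1 : σ ^ 2 ≤ δ ^ 2 := by
        rw [← sq_abs σ]
        exact pow_le_pow_left₀ (abs_nonneg σ) hcase 2
      have : δ ^ 2 ≤ ρ ^ 2 / 2 := by rw [hδdef, hρdef]; nlinarith
      linarith
    have key : 1 / ((σ ^ 2 + a ^ 2) * Real.sqrt (1 + σ ^ 2))
        - ∑ k ∈ Finset.range (n + 1), u k * σ ^ (2 * k)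
        = ∑' i : ℕ, u (i + (n + 1)) * σ ^ (2 * (i + (n + 1))) := by
      have := Summable.sum_add_tsum_nat_add (n + 1) hs.summable
      rw [hs.tsum_eq] at this
      linarith [this]
    rw [key]
    have hAB : σ ^ 2 / ρ ^ 2 ≤ 1 / 2 := by
      rw [div_le_div_iff₀ (by positivity) (by norm_num)]
      linarith
    have hAB0 : 0 ≤ σ ^ 2 / ρ ^ 2 := by positivity
    have hbound : ∀ i : ℕ, ‖u (i + (n + 1)) * σ ^ (2 * (i + (n + 1)))‖
        ≤ (M / (ρ ^ 2) ^ (n + 1) * (σ ^ 2) ^ (n + 1)) * (1 / 2) ^ i := by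
      intro i
      set j := i + (n + 1) with hj
      rw [Real.norm_eq_abs, abs_mul, abs_pow, pow_mul, sq_abs]
      have h1 : |u j| ≤ M / (ρ ^ 2) ^ j := by
        rw [le_div_iff₀ (by positivity)]; exact hM' j
      calc |u j| * (σ ^ 2) ^ j ≤ M / (ρ ^ 2) ^ j * (σ ^ 2) ^ j := by
            exact mul_le_mul_of_nonneg_right h1 (by positivity)
        _ = M * (σ ^ 2 / ρ ^ 2) ^ j := by rw [div_mul_eq_mul_div, mul_div_assoc, ← div_pow]
        _ = M * (σ ^ 2 / ρ ^ 2) ^ (n + 1) * (σ ^ 2 / ρ ^ 2) ^ i := by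
            rw [hj, pow_add]; ring
        _ ≤ M * (σ ^ 2 / ρ ^ 2) ^ (n + 1) * (1 / 2) ^ i := by
            refine mul_le_mul_of_nonneg_left (pow_le_pow_left₀ hAB0 hAB i) (by positivity)
        _ = (M / (ρ ^ 2) ^ (n + 1) * (σ ^ 2) ^ (n + 1)) * (1 / 2) ^ i := by
            rw [div_pow]; ring
    have hgeo : HasSum (fun i : ℕ => (M / (ρ ^ 2) ^ (n + 1) * (σ ^ 2) ^ (n + 1)) * (1 / 2) ^ i)
        ((M / (ρ ^ 2) ^ (n + 1) * (σ ^ 2) ^ (n + 1)) * 2) := by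
      have := hasSum_geometric_of_lt_one (by norm_num : (0:ℝ) ≤ 1/2) (by norm_num : (1:ℝ)/2 < 1)
      have h2 : (1 - 1/2 : ℝ)⁻¹ = 2 := by norm_num
      rw [h2] at this
      exact this.mul_left _
    have := tsum_of_norm_bounded hgeo hbound
    rw [Real.norm_eq_abs] at this
    calc |∑' i : ℕ, u (i + (n + 1)) * σ ^ (2 * (i + (n + 1)))|
        ≤ (M / (ρ ^ 2) ^ (n + 1) * (σ ^ 2) ^ (n + 1)) * 2 := this
      _ = C₁ * σ ^ (2 * (n + 1)) := by rw [hC₁, pow_mul]; ring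
      _ ≤ max C₁ C₂ * σ ^ (2 * (n + 1)) := by
          exact mul_le_mul_of_nonneg_right (le_max_left _ _) (by rw [pow_mul]; positivity)
  · -- large σ
    have hδσ : δ ^ 2 ≤ σ ^ 2 := by
      rw [← sq_abs σ]
      exact pow_le_pow_left₀ hδ.le hcase.le 2
    set T : ℝ := σ ^ 2 / δ ^ 2 with hT
    have hT1 : 1 ≤ T := by rw [hT, le_div_iff₀ (by positivity)]; linarith
    have hsqrt : 1 ≤ Real.sqrt (1 + σ ^ 2) := by
      have := Real.sqrt_le_sqrt (show (1:ℝ) ≤ 1 + σ ^ 2 by nlinarith)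
      simpa using this
    have hfb : |1 / ((σ ^ 2 + a ^ 2) * Real.sqrt (1 + σ ^ 2))| ≤ 1 / a ^ 2 := by
      rw [abs_of_nonneg (by positivity)]
      apply div_le_div_of_nonneg_left (by norm_num) (by positivity)
      nlinarith [mul_le_mul_of_nonneg_left hsqrt (show (0:ℝ) ≤ σ ^ 2 + a ^ 2 by positivity),
        sq_nonneg σ]
    have hpb : |∑ k ∈ Finset.range (n + 1), u k * σ ^ (2 * k)|
        ≤ (∑ k ∈ Finset.range (n + 1), |u k| * (δ ^ 2) ^ k) * T ^ (n + 1) := by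
      calc |∑ k ∈ Finset.range (n + 1), u k * σ ^ (2 * k)|
          ≤ ∑ k ∈ Finset.range (n + 1), |u k * σ ^ (2 * k)| :=
            Finset.abs_sum_le_sum_abs _ _
        _ ≤ ∑ k ∈ Finset.range (n + 1), |u k| * (δ ^ 2) ^ k * T ^ (n + 1) := by
            apply Finset.sum_le_sum
            intro k hk
            rw [abs_mul, abs_pow, pow_mul, sq_abs]
            have : (σ ^ 2) ^ k = (δ ^ 2) ^ k * T ^ k := by
              have hc : δ ^ 2 * (σ ^ 2 / δ ^ 2) = σ ^ 2 := by field_simp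
              rw [hT, ← mul_pow, hc]
            rw [this, ← mul_assoc]
            refine mul_le_mul_of_nonneg_left ?_ (by positivity)
            exact pow_le_pow_right₀ hT1 (by have := Finset.mem_range.mp hk; omega)
        _ = (∑ k ∈ Finset.range (n + 1), |u k| * (δ ^ 2) ^ k) * T ^ (n + 1) := by
            rw [Finset.sum_mul]
    have hTs : T ^ (n + 1) = σ ^ (2 * (n + 1)) / (δ ^ 2) ^ (n + 1) := by
      rw [hT, div_pow, pow_mul]
    calc |1 / ((σ ^ 2 + a ^ 2) * Real.sqrt (1 + σ ^ 2))
          - ∑ k ∈ Finset.range (n + 1), u k * σ ^ (2 * k)|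
        ≤ |1 / ((σ ^ 2 + a ^ 2) * Real.sqrt (1 + σ ^ 2))|
          + |∑ k ∈ Finset.range (n + 1), u k * σ ^ (2 * k)| := abs_sub _ _
      _ ≤ 1 / a ^ 2 * T ^ (n + 1)
          + (∑ k ∈ Finset.range (n + 1), |u k| * (δ ^ 2) ^ k) * T ^ (n + 1) := by
          have h1T : (1:ℝ) ≤ T ^ (n + 1) := by
            calc (1:ℝ) = 1 ^ (n + 1) := by norm_num
              _ ≤ T ^ (n + 1) := pow_le_pow_left₀ (by norm_num) hT1 _
          refine add_le_add ?_ hpb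
          calc |1 / ((σ ^ 2 + a ^ 2) * Real.sqrt (1 + σ ^ 2))| ≤ 1 / a ^ 2 := hfb
            _ ≤ 1 / a ^ 2 * T ^ (n + 1) := le_mul_of_one_le_right (by positivity) h1T
      _ = C₂ * σ ^ (2 * (n + 1)) := by
          rw [hC₂, hTs]; field_simp
      _ ≤ max C₁ C₂ * σ ^ (2 * (n + 1)) :=
          mul_le_mul_of_nonneg_right (le_max_right _ _) (by rw [pow_mul]; positivity)

private lemma integrable_pow_exp {b : ℝ} (hb : 0 < b) (m : ℕ) :
    Integrable fun x : ℝ => x ^ m * Real.exp (-b * x ^ 2) := by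
  have := integrable_rpow_mul_exp_neg_mul_sq hb
    (s := (m : ℝ)) (lt_of_lt_of_le neg_one_lt_zero (Nat.cast_nonneg m))
  simpa [Real.rpow_natCast] using this

end aux

/-- Laplace-type asymptotic expansion of
`U(a,z) = ∫ e^{-zσ²}/((σ²+a²)√(1+σ²)) dσ` with coefficients the Maclaurin coefficients
`u_k` (in powers of `σ²`) of the integrand's non-Gaussian factor. -/
theorem stmt11 (a : ℝ) (ha : a ∈ Set.Ioo (0 : ℝ) 1) (u : ℕ → ℝ) (r : ℝ) (hr : 0 < r)
    (hu : ∀ σ : ℝ, |σ| < r →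
      HasSum (fun k : ℕ => u k * σ ^ (2 * k))
        (1 / ((σ ^ 2 + a ^ 2) * Real.sqrt (1 + σ ^ 2)))) :
    ∀ n : ℕ,
      (fun z : ℝ =>
          (∫ σ : ℝ, Real.exp (-z * σ ^ 2) / ((σ ^ 2 + a ^ 2) * Real.sqrt (1 + σ ^ 2))) -
            Real.sqrt (Real.pi / z) *
              ∑ k ∈ Finset.range (n + 1),
                u k * (Real.Gamma (1 / 2 + k) / Real.Gamma (1 / 2)) / z ^ k)
        =O[atTop] fun z : ℝ => z ^ (-(n : ℝ) - 3 / 2) := by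
  open MeasureTheory Real Set in
  obtain ⟨ha0, -⟩ := ha
  intro n
  obtain ⟨C, hC⟩ := remainder_bound a ha0 u r hr hu n
  rw [isBigO_iff]
  refine ⟨C * Real.Gamma ((n + 1 : ℕ) + 1/2), ?_⟩
  filter_upwards [eventually_gt_atTop 0] with z hz

  set f : ℝ → ℝ := fun σ => 1 / ((σ ^ 2 + a ^ 2) * Real.sqrt (1 + σ ^ 2)) with hf
  set p : ℝ → ℝ := fun σ => ∑ k ∈ Finset.range (n + 1), u k * σ ^ (2 * k) with hp
  have hf_cont : Continuous f := by
    apply Continuous.div continuous_const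
    · exact ((continuous_pow 2).add continuous_const).mul
        (Real.continuous_sqrt.comp (continuous_const.add (continuous_pow 2)))
    · intro σ
      have : 0 < (σ ^ 2 + a ^ 2) * Real.sqrt (1 + σ ^ 2) :=
        mul_pos (by positivity) (Real.sqrt_pos.mpr (by positivity))
      exact ne_of_gt this
  have hp_cont : Continuous p := by
    apply continuous_finset_sum
    intro k _
    exact continuous_const.mul (continuous_pow _)
  have hterm : ∀ k : ℕ, Integrable fun σ : ℝ => Real.exp (-z * σ ^ 2) * (u k * σ ^ (2 * k)) := by
    intro k
    have h := (integrable_pow_exp hz (2 * k)).const_mul (u k)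
    have heq : (fun σ : ℝ => u k * (σ ^ (2 * k) * Real.exp (-z * σ ^ 2)))
        = fun σ : ℝ => Real.exp (-z * σ ^ 2) * (u k * σ ^ (2 * k)) := by
      ext σ; ring
    rwa [heq] at h
  have hmulsum : (fun σ : ℝ => Real.exp (-z * σ ^ 2) * p σ)
      = fun σ : ℝ => ∑ k ∈ Finset.range (n + 1), Real.exp (-z * σ ^ 2) * (u k * σ ^ (2 * k)) := by
    ext σ; rw [hp, Finset.mul_sum]
  have hintp : Integrable fun σ : ℝ => Real.exp (-z * σ ^ 2) * p σ := by
    rw [hmulsum]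
    exact integrable_finset_sum _ (fun k _ => hterm k)
  have hint_fp : Integrable fun σ : ℝ => Real.exp (-z * σ ^ 2) * (f σ - p σ) := by
    apply Integrable.mono' ((integrable_pow_exp hz (2 * (n + 1))).const_mul C)
    · exact (((Real.continuous_exp.comp (by continuity)).mul
        (hf_cont.sub hp_cont))).aestronglyMeasurable
    · refine Filter.Eventually.of_forall (fun σ => ?_)
      rw [Real.norm_eq_abs, abs_mul, abs_of_pos (Real.exp_pos _)]
      calc Real.exp (-z * σ ^ 2) * |f σ - p σ|
          ≤ Real.exp (-z * σ ^ 2) * (C * σ ^ (2 * (n + 1))) :=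
            mul_le_mul_of_nonneg_left (hC σ) (Real.exp_pos _).le
        _ = C * (σ ^ (2 * (n + 1)) * Real.exp (-z * σ ^ 2)) := by ring
  have hintf : Integrable fun σ : ℝ => Real.exp (-z * σ ^ 2) * f σ := by
    exact (hint_fp.add hintp).congr
      (Filter.Eventually.of_forall fun σ => by simp only [Pi.add_apply]; ring)
  -- value of the polynomial integral
  have hpval : ∫ σ : ℝ, Real.exp (-z * σ ^ 2) * p σ
      = Real.sqrt (Real.pi / z) * ∑ k ∈ Finset.range (n + 1),
          u k * (Real.Gamma (1 / 2 + k) / Real.Gamma (1 / 2)) / z ^ k := by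
    rw [hmulsum, integral_finset_sum _ (fun k _ => hterm k), Finset.mul_sum]
    refine Finset.sum_congr rfl fun k _ => ?_
    have h1 : (fun σ : ℝ => Real.exp (-z * σ ^ 2) * (u k * σ ^ (2 * k)))
        = fun σ : ℝ => u k * (σ ^ (2 * k) * Real.exp (-z * σ ^ 2)) := by ext σ; ring
    rw [h1, integral_const_mul, moment_int hz k]
    have hsz : (0:ℝ) < Real.sqrt z := Real.sqrt_pos.mpr hz
    have hzk : (0:ℝ) < z ^ k := by positivity
    have hzpow : (z : ℝ) ^ (-(k:ℝ) - 1/2) = (Real.sqrt z * z ^ k)⁻¹ := by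
      rw [show -(k:ℝ) - 1/2 = -((k:ℝ) + 1/2) by ring, Real.rpow_neg hz.le,
        Real.rpow_add hz, Real.rpow_natCast, Real.sqrt_eq_rpow]
      rw [mul_comm]
    have hsqdiv : Real.sqrt (Real.pi / z) = Real.sqrt Real.pi / Real.sqrt z :=
      Real.sqrt_div Real.pi_nonneg z
    have hgam : ((k:ℝ) + 1/2) = (1/2 + (k:ℝ)) := by ring
    rw [hzpow, hsqdiv, Real.Gamma_one_half_eq, hgam]
    have hπ : (0:ℝ) < Real.sqrt Real.pi := Real.sqrt_pos.mpr Real.pi_pos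
    field_simp
  have hED : (fun σ : ℝ => Real.exp (-z * σ ^ 2) / ((σ ^ 2 + a ^ 2) * Real.sqrt (1 + σ ^ 2)))
      = fun σ : ℝ => Real.exp (-z * σ ^ 2) * f σ := by
    ext σ; rw [hf, mul_one_div]
  have key : (∫ σ : ℝ, Real.exp (-z * σ ^ 2) / ((σ ^ 2 + a ^ 2) * Real.sqrt (1 + σ ^ 2)))
      - Real.sqrt (Real.pi / z) * ∑ k ∈ Finset.range (n + 1),
          u k * (Real.Gamma (1 / 2 + k) / Real.Gamma (1 / 2)) / z ^ k
      = ∫ σ : ℝ, Real.exp (-z * σ ^ 2) * (f σ - p σ) := by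
    rw [hED, ← hpval, ← integral_sub hintf hintp]
    congr 1
    ext σ
    ring
  rw [key]
  have hbnd : ‖∫ σ : ℝ, Real.exp (-z * σ ^ 2) * (f σ - p σ)‖
      ≤ ∫ σ : ℝ, C * (σ ^ (2 * (n + 1)) * Real.exp (-z * σ ^ 2)) := by
    apply norm_integral_le_of_norm_le ((integrable_pow_exp hz (2 * (n + 1))).const_mul C)
    refine Filter.Eventually.of_forall (fun σ => ?_)
    rw [Real.norm_eq_abs, abs_mul, abs_of_pos (Real.exp_pos _)]
    calc Real.exp (-z * σ ^ 2) * |f σ - p σ|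
        ≤ Real.exp (-z * σ ^ 2) * (C * σ ^ (2 * (n + 1))) :=
          mul_le_mul_of_nonneg_left (hC σ) (Real.exp_pos _).le
      _ = C * (σ ^ (2 * (n + 1)) * Real.exp (-z * σ ^ 2)) := by ring
  refine le_trans hbnd ?_
  rw [integral_const_mul, moment_int hz (n + 1)]
  have hexp : -(((n + 1 : ℕ)):ℝ) - 1/2 = -(n:ℝ) - 3/2 := by push_cast; ring
  rw [hexp, Real.norm_eq_abs, abs_of_pos (Real.rpow_pos_of_pos hz _), mul_assoc]
end

section
/- For all a > 0 and z > 0, ∫_{−∞}^{∞} e^{−z σ²} / (σ² + a²) dσ = (π/a) e^{z a²} erfc(a √z), where erfc(x) = (2/√π) ∫_x^∞ e^{−t²} dt is the complementary error function. -/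
/-- The complementary error function `erfc(x) = (2/√π) ∫_x^∞ e^{-t²} dt`. -/
noncomputable def erfc (x : ℝ) : ℝ :=
  2 / Real.sqrt Real.pi * ∫ t in Set.Ioi x, Real.exp (-t ^ 2)


section Aux
open MeasureTheory Real Set

set_option maxHeartbeats 1600000

lemma L1 {c : ℝ} (hc : 0 < c) : ∫ t in Ioi (0:ℝ), Real.exp (-(c * t)) = c⁻¹ := by
  have h := integral_comp_mul_left_Ioi (fun x => Real.exp (-x)) 0 hc
  simp only [mul_zero, integral_exp_neg_Ioi, neg_zero, Real.exp_zero, smul_eq_mul, mul_one] at h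
  simpa using h


lemma L2' (a z σ : ℝ) (ha : 0 < a) :
    ∫ t in Ioi (0:ℝ), Real.exp (-(z + t) * σ ^ 2 - a ^ 2 * t)
      = Real.exp (-z * σ ^ 2) / (σ ^ 2 + a ^ 2) := by
  have hc : 0 < σ ^ 2 + a ^ 2 := by positivity
  calc ∫ t in Ioi (0:ℝ), Real.exp (-(z + t) * σ ^ 2 - a ^ 2 * t)
      = ∫ t in Ioi (0:ℝ), Real.exp (-z * σ ^ 2) * Real.exp (-((σ ^ 2 + a ^ 2) * t)) := by
        congr 1; ext t; rw [← Real.exp_add]; ring_nf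
    _ = Real.exp (-z * σ ^ 2) * (σ ^ 2 + a ^ 2)⁻¹ := by
        rw [integral_const_mul, L1 hc]
    _ = _ := by rw [div_eq_mul_inv]


lemma Lint (a z : ℝ) (ha : 0 < a) (σ : ℝ) :
    IntegrableOn (fun t => Real.exp (-(z + t) * σ ^ 2 - a ^ 2 * t)) (Ioi (0:ℝ)) := by
  have hc : 0 < σ ^ 2 + a ^ 2 := by positivity
  have base : IntegrableOn (fun t => Real.exp (-(σ ^ 2 + a ^ 2) * t)) (Ioi (0:ℝ)) :=
    exp_neg_integrableOn_Ioi 0 hc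
  have h2 : IntegrableOn (fun t => Real.exp (-z * σ ^ 2) * Real.exp (-(σ ^ 2 + a ^ 2) * t))
      (Ioi (0:ℝ)) := base.const_mul _
  refine h2.congr_fun (fun t _ => ?_) measurableSet_Ioi
  dsimp only; rw [← Real.exp_add]; ring_nf


lemma L3 (a z : ℝ) (ha : 0 < a) (hz : 0 < z) :
    Integrable (fun p : ℝ × ℝ => Real.exp (-(z + p.2) * p.1 ^ 2 - a ^ 2 * p.2))
      (volume.prod (volume.restrict (Ioi 0))) := by
  have hcont : Continuous (fun p : ℝ × ℝ => Real.exp (-(z + p.2) * p.1 ^ 2 - a ^ 2 * p.2)) := by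
    fun_prop
  rw [integrable_prod_iff hcont.aestronglyMeasurable]
  refine ⟨Filter.Eventually.of_forall (fun σ => Lint a z ha σ), ?_⟩
  have heq : ∀ σ : ℝ, (∫ t in Ioi (0:ℝ),
      ‖Real.exp (-(z + t) * σ ^ 2 - a ^ 2 * t)‖) = Real.exp (-z * σ ^ 2) / (σ ^ 2 + a ^ 2) := by
    intro σ
    rw [← L2' a z σ ha]
    congr 1; ext t; exact Real.norm_of_nonneg (Real.exp_pos _).le
  simp only [heq]
  have hb : Integrable (fun σ : ℝ => (a ^ 2)⁻¹ * Real.exp (-z * σ ^ 2)) :=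
    (integrable_exp_neg_mul_sq hz).const_mul _
  have hmeas : AEStronglyMeasurable (fun σ : ℝ => Real.exp (-z * σ ^ 2) / (σ ^ 2 + a ^ 2))
      volume := by
    apply Continuous.aestronglyMeasurable
    apply Continuous.div (by fun_prop) (by fun_prop)
    intro σ; positivity
  refine hb.mono' hmeas (Filter.Eventually.of_forall fun σ => ?_)
  have hc : 0 < σ ^ 2 + a ^ 2 := by positivity
  have ha2 : 0 < a ^ 2 := by positivity
  rw [Real.norm_of_nonneg (by positivity), div_le_iff₀ hc]
  nlinarith [Real.exp_pos (-z * σ ^ 2), sq_nonneg σ, inv_mul_cancel₀ ha2.ne', mul_nonneg (mul_nonneg (inv_nonneg.2 ha2.le) (Real.exp_pos (-z * σ ^ 2)).le) (sq_nonneg σ)]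

-- Step C: substitution t = x^2 - z
lemma L4 (a z : ℝ) (ha : 0 < a) (hz : 0 < z) :
    ∫ t in Ioi (0:ℝ), Real.sqrt (π / (z + t)) * Real.exp (-a ^ 2 * t)
      = ∫ x in Ioi (Real.sqrt z), 2 * Real.sqrt π * Real.exp (z * a ^ 2)
          * Real.exp (-a ^ 2 * x ^ 2) := by
  set g : ℝ → ℝ := fun t => Real.sqrt (π / (z + t)) * Real.exp (-a ^ 2 * t) with hg
  have hsz : 0 < Real.sqrt z := Real.sqrt_pos.2 hz
  have hsq : Real.sqrt z ^ 2 = z := Real.sq_sqrt hz.le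
  have himg : ∀ x : ℝ, x ∈ Ici (Real.sqrt z) → x ^ 2 - z ∈ Ici (0:ℝ) := by
    intro x hx
    have : Real.sqrt z ^ 2 ≤ x ^ 2 := by
      apply pow_le_pow_left₀ hsz.le hx
    simp only [mem_Ici, sub_nonneg]
    linarith [hsq ▸ this]
  have hpt : ∀ x ∈ Ici (Real.sqrt z), g (x ^ 2 - z) * (2 * x)
      = 2 * Real.sqrt π * Real.exp (z * a ^ 2) * Real.exp (-a ^ 2 * x ^ 2) := by
    intro x hx
    have hx0 : 0 < x := lt_of_lt_of_le hsz hx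
    have h1 : z + (x ^ 2 - z) = x ^ 2 := by ring
    have h2 : Real.sqrt (π / x ^ 2) = Real.sqrt π / x := by
      rw [Real.sqrt_div pi_pos.le, Real.sqrt_sq hx0.le]
    have h3 : Real.exp (-a ^ 2 * (x ^ 2 - z))
        = Real.exp (z * a ^ 2) * Real.exp (-a ^ 2 * x ^ 2) := by
      rw [← Real.exp_add]; ring_nf
    rw [hg]; simp only [h1, h2, h3]
    field_simp
  have hgcont : ContinuousOn g (Ici (0:ℝ)) := by
    apply ContinuousOn.mul ?_ (by fun_prop)
    apply Real.continuous_sqrt.comp_continuousOn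
    apply ContinuousOn.div continuousOn_const (by fun_prop)
    intro t ht; have : (0:ℝ) ≤ t := ht; positivity
  have hgint : IntegrableOn g (Ici (0:ℝ)) := by
    have hb : IntegrableOn (fun t : ℝ => Real.sqrt (π / z) * Real.exp (-a ^ 2 * t))
        (Ici (0:ℝ)) := by
      rw [integrableOn_Ici_iff_integrableOn_Ioi]
      exact (exp_neg_integrableOn_Ioi 0 (by positivity)).const_mul _
    refine hb.mono' (hgcont.aestronglyMeasurable measurableSet_Ici) ?_
    rw [ae_restrict_iff' measurableSet_Ici]
    refine Filter.Eventually.of_forall fun t ht => ?_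
    have ht0 : (0:ℝ) ≤ t := ht
    have h1 : Real.sqrt (π / (z + t)) ≤ Real.sqrt (π / z) := by
      apply Real.sqrt_le_sqrt
      apply div_le_div_of_nonneg_left pi_pos.le hz (by linarith)
    rw [Real.norm_of_nonneg (by positivity)]
    exact mul_le_mul_of_nonneg_right h1 (Real.exp_pos _).le
  have hderiv : ∀ x ∈ Ioi (Real.sqrt z),
      HasDerivWithinAt (fun u : ℝ => u ^ 2 - z) (2 * x) (Ioi x) x := by
    intro x _
    have h := ((hasDerivAt_pow 2 x).sub_const z).hasDerivWithinAt (s := Ioi x)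
    simpa using h
  have hft : Filter.Tendsto (fun u : ℝ => u ^ 2 - z) Filter.atTop Filter.atTop := by
    apply Filter.tendsto_atTop_add_const_right
    exact Filter.tendsto_pow_atTop (two_ne_zero)
  have hgint2 : IntegrableOn (fun x => (g ∘ (fun u : ℝ => u ^ 2 - z)) x * (2 * x))
      (Ici (Real.sqrt z)) := by
    have hb : IntegrableOn (fun x : ℝ => 2 * Real.sqrt π * Real.exp (z * a ^ 2)
        * Real.exp (-a ^ 2 * x ^ 2)) (Ici (Real.sqrt z)) :=
      ((integrable_exp_neg_mul_sq (by positivity : 0 < a ^ 2)).const_mul _).integrableOn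
    exact hb.congr_fun (fun x hx => (hpt x hx).symm) measurableSet_Ici
  have key := integral_comp_mul_deriv_Ioi
    (f := fun u : ℝ => u ^ 2 - z) (f' := fun x => 2 * x) (g := g) (a := Real.sqrt z)
    (by fun_prop) hft hderiv
    (hgcont.mono (fun t ht => by
      obtain ⟨x, hx, rfl⟩ := ht; exact himg x (mem_Ici.2 (le_of_lt hx))))
    (hgint.mono_set (fun t ht => by obtain ⟨x, hx, rfl⟩ := ht; exact himg x hx))
    hgint2
  have key' : (∫ x in Ioi (Real.sqrt z), g (x ^ 2 - z) * (2 * x)) = ∫ u in Ioi (0:ℝ), g u := by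
    simpa [Function.comp, hsq] using key
  rw [← key']
  apply setIntegral_congr_fun measurableSet_Ioi
  intro x hx
  exact hpt x (mem_Ici.2 (le_of_lt hx))


end Aux

set_option maxHeartbeats 1600000 in
open MeasureTheory Real Set in
/-- `∫ e^{-zσ²}/(σ²+a²) dσ = (π/a) e^{za²} erfc(a√z)`. -/
theorem stmt13 (a z : ℝ) (ha : 0 < a) (hz : 0 < z) :
    ∫ σ : ℝ, Real.exp (-z * σ ^ 2) / (σ ^ 2 + a ^ 2) =
      Real.pi / a * Real.exp (z * a ^ 2) * erfc (a * Real.sqrt z) := by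
  have swap := integral_integral_swap (μ := volume) (ν := volume.restrict (Ioi 0))
    (f := fun σ t => Real.exp (-(z + t) * σ ^ 2 - a ^ 2 * t)) (L3 a z ha hz)
  have step1 : ∫ σ : ℝ, Real.exp (-z * σ ^ 2) / (σ ^ 2 + a ^ 2)
      = ∫ t in Ioi (0:ℝ), ∫ σ : ℝ, Real.exp (-(z + t) * σ ^ 2 - a ^ 2 * t) := by
    rw [← swap]
    congr 1; ext σ; exact (L2' a z σ ha).symm
  have step2 : ∀ t : ℝ, (∫ σ : ℝ, Real.exp (-(z + t) * σ ^ 2 - a ^ 2 * t))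
      = Real.sqrt (π / (z + t)) * Real.exp (-a ^ 2 * t) := by
    intro t
    have : (fun σ : ℝ => Real.exp (-(z + t) * σ ^ 2 - a ^ 2 * t))
        = fun σ : ℝ => Real.exp (-(z + t) * σ ^ 2) * Real.exp (-a ^ 2 * t) := by
      ext σ; rw [← Real.exp_add]; ring_nf
    rw [this, integral_mul_const, integral_gaussian]
  have stepD : ∫ x in Ioi (Real.sqrt z), Real.exp (-a ^ 2 * x ^ 2)
      = a⁻¹ * ∫ v in Ioi (a * Real.sqrt z), Real.exp (-v ^ 2) := by
    have h := integral_comp_mul_left_Ioi (fun v => Real.exp (-v ^ 2)) (Real.sqrt z) ha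
    simp only [smul_eq_mul] at h
    rw [← h]
    congr 1; ext x; rw [mul_pow]; ring_nf
  rw [step1]
  simp only [step2]
  rw [L4 a z ha hz, integral_const_mul, stepD, erfc]
  have hπ : Real.sqrt π * Real.sqrt π = π := Real.mul_self_sqrt pi_pos.le
  have hπ0 : Real.sqrt π ≠ 0 := by positivity
  field_simp
  linear_combination (∫ v in Ioi (a * Real.sqrt z), Real.exp (-v ^ 2)) * hπ
end
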